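/- Let n ≥ k ≥ 1, let V•, U, Ũ ∈ ℝ^{n×k} have orthonormal columns, let W, W̃ ∈ ℝ^{k×k} be orthogonal matrices, and let ξ, ξ̃ ∈ ℝ^{k×k} be diagonal matrices with real entries. Set V = V• W cos(ξ) Wᵀ + U sin(ξ) Wᵀ and Ṽ = V• W̃ cos(ξ̃) W̃ᵀ + Ũ sin(ξ̃) W̃ᵀ. Then ‖V − Ṽ‖_F ≤ 3‖W − W̃‖_F + ‖U − Ũ‖_F + ‖sin(ξ) − sin(ξ̃)‖_F + ‖cos(ξ) − cos(ξ̃)‖_F. -/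
import Mathlib


open Matrix

/-- The Frobenius norm of a real matrix. -/
noncomputable def frobNorm {m n : ℕ} (A : Matrix (Fin m) (Fin n) ℝ) : ℝ :=
  Real.sqrt (∑ i, ∑ j, A i j ^ 2)

namespace FrobAux

noncomputable def S {m n : ℕ} (A : Matrix (Fin m) (Fin n) ℝ) : ℝ :=
  ∑ i, ∑ j, A i j ^ 2

lemma S_nonneg {m n : ℕ} (A : Matrix (Fin m) (Fin n) ℝ) : 0 ≤ S A := by
  refine Finset.sum_nonneg fun i _ => Finset.sum_nonneg fun j _ => sq_nonneg _

lemma frob_eq {m n : ℕ} (A : Matrix (Fin m) (Fin n) ℝ) :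
    frobNorm A = Real.sqrt (S A) := rfl

lemma frob_mono {m n m' n' : ℕ} {A : Matrix (Fin m) (Fin n) ℝ}
    {B : Matrix (Fin m') (Fin n') ℝ} (h : S A ≤ S B) : frobNorm A ≤ frobNorm B :=
  Real.sqrt_le_sqrt h

lemma S_eq_trace {m n : ℕ} (A : Matrix (Fin m) (Fin n) ℝ) :
    S A = Matrix.trace (Aᵀ * A) := by
  simp [S, Matrix.trace, Matrix.diag, Matrix.mul_apply, Matrix.transpose_apply, sq]
  exact Finset.sum_comm

lemma S_transpose {m n : ℕ} (A : Matrix (Fin m) (Fin n) ℝ) : S Aᵀ = S A := by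
  simp [S]
  exact Finset.sum_comm

lemma S_eq_trace' {m n : ℕ} (A : Matrix (Fin m) (Fin n) ℝ) :
    S A = Matrix.trace (A * Aᵀ) := by
  rw [← S_transpose A, S_eq_trace, Matrix.transpose_transpose]

lemma S_left_orth {m n p : ℕ} (Q : Matrix (Fin m) (Fin n) ℝ) (hQ : Qᵀ * Q = 1)
    (A : Matrix (Fin n) (Fin p) ℝ) : S (Q * A) = S A := by
  rw [S_eq_trace, S_eq_trace, Matrix.transpose_mul, Matrix.mul_assoc,
    ← Matrix.mul_assoc Qᵀ Q A, hQ, Matrix.one_mul]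

lemma S_right_orth {m n : ℕ} (R : Matrix (Fin n) (Fin n) ℝ) (hR : R * Rᵀ = 1)
    (A : Matrix (Fin m) (Fin n) ℝ) : S (A * R) = S A := by
  rw [S_eq_trace', S_eq_trace', Matrix.transpose_mul, ← Matrix.mul_assoc,
    Matrix.mul_assoc A R Rᵀ, hR, Matrix.mul_one]

lemma S_mul_diag_le {m n : ℕ} (A : Matrix (Fin m) (Fin n) ℝ) (v : Fin n → ℝ)
    (hv : ∀ j, v j ^ 2 ≤ 1) : S (A * Matrix.diagonal v) ≤ S A := by
  refine Finset.sum_le_sum fun i _ => Finset.sum_le_sum fun j _ => ?_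
  rw [Matrix.mul_diagonal, mul_pow]
  calc A i j ^ 2 * v j ^ 2 ≤ A i j ^ 2 * 1 :=
        mul_le_mul_of_nonneg_left (hv j) (sq_nonneg _)
    _ = A i j ^ 2 := mul_one _

lemma S_diag_mul_le {m n : ℕ} (A : Matrix (Fin m) (Fin n) ℝ) (v : Fin m → ℝ)
    (hv : ∀ i, v i ^ 2 ≤ 1) : S (Matrix.diagonal v * A) ≤ S A := by
  refine Finset.sum_le_sum fun i _ => Finset.sum_le_sum fun j _ => ?_
  rw [Matrix.diagonal_mul, mul_pow]
  calc v i ^ 2 * A i j ^ 2 ≤ 1 * A i j ^ 2 :=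
        mul_le_mul_of_nonneg_right (hv i) (sq_nonneg _)
    _ = A i j ^ 2 := one_mul _

lemma frob_eq_norm {m n : ℕ} (A : Matrix (Fin m) (Fin n) ℝ) :
    frobNorm A = ‖(WithLp.equiv 2 (Fin m × Fin n → ℝ)).symm (fun p => A p.1 p.2)‖ := by
  rw [EuclideanSpace.norm_eq]
  simp [frobNorm, Fintype.sum_prod_type, Real.norm_eq_abs, sq_abs]

lemma frob_add_le {m n : ℕ} (A B : Matrix (Fin m) (Fin n) ℝ) :
    frobNorm (A + B) ≤ frobNorm A + frobNorm B := by
  rw [frob_eq_norm, frob_eq_norm, frob_eq_norm]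
  have : ((WithLp.equiv 2 (Fin m × Fin n → ℝ)).symm (fun p => (A + B) p.1 p.2)) =
      (WithLp.equiv 2 (Fin m × Fin n → ℝ)).symm (fun p => A p.1 p.2)
      + (WithLp.equiv 2 (Fin m × Fin n → ℝ)).symm (fun p => B p.1 p.2) := by
    rfl
  rw [this]
  exact norm_add_le _ _

end FrobAux

open FrobAux in
/-- For `V•, U, Ũ ∈ ℝ^{n×k}` with orthonormal columns, orthogonal `W, W̃ ∈ ℝ^{k×k}` and
diagonal `ξ = diag d`, `ξ̃ = diag d̃`, setting `V = V• W cos(ξ) Wᵀ + U sin(ξ) Wᵀ` and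
`Ṽ = V• W̃ cos(ξ̃) W̃ᵀ + Ũ sin(ξ̃) W̃ᵀ`:
`‖V − Ṽ‖_F ≤ 3‖W − W̃‖_F + ‖U − Ũ‖_F + ‖sin(ξ) − sin(ξ̃)‖_F + ‖cos(ξ) − cos(ξ̃)‖_F`. -/
theorem frobNorm_exp_diff_le (n k : ℕ) (hk : 1 ≤ k) (hkn : k ≤ n)
    (Vb U Ut : Matrix (Fin n) (Fin k) ℝ)
    (hVb : Vbᵀ * Vb = 1) (hU : Uᵀ * U = 1) (hUt : Utᵀ * Ut = 1)
    (W Wt : Matrix (Fin k) (Fin k) ℝ)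
    (hW : Wᵀ * W = 1) (hW' : W * Wᵀ = 1)
    (hWt : Wtᵀ * Wt = 1) (hWt' : Wt * Wtᵀ = 1)
    (d dt : Fin k → ℝ) :
    frobNorm ((Vb * W * Matrix.diagonal (fun i => Real.cos (d i)) * Wᵀ
          + U * Matrix.diagonal (fun i => Real.sin (d i)) * Wᵀ)
        - (Vb * Wt * Matrix.diagonal (fun i => Real.cos (dt i)) * Wtᵀ
          + Ut * Matrix.diagonal (fun i => Real.sin (dt i)) * Wtᵀ))
      ≤ 3 * frobNorm (W - Wt) + frobNorm (U - Ut)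
        + frobNorm (Matrix.diagonal (fun i => Real.sin (d i))
            - Matrix.diagonal (fun i => Real.sin (dt i)))
        + frobNorm (Matrix.diagonal (fun i => Real.cos (d i))
            - Matrix.diagonal (fun i => Real.cos (dt i))) := by
  set c := Matrix.diagonal (fun i => Real.cos (d i)) with hc
  set ct := Matrix.diagonal (fun i => Real.cos (dt i)) with hct
  set s := Matrix.diagonal (fun i => Real.sin (d i)) with hs
  set st := Matrix.diagonal (fun i => Real.sin (dt i)) with hst
  have hWtW : (Wᵀ) * (Wᵀ)ᵀ = 1 := by rw [Matrix.transpose_transpose]; exact hW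
  have hcos2 : ∀ i, Real.cos (d i) ^ 2 ≤ 1 := fun i => Real.cos_sq_le_one _
  have hcos2t : ∀ i, Real.cos (dt i) ^ 2 ≤ 1 := fun i => Real.cos_sq_le_one _
  have hsin2 : ∀ i, Real.sin (d i) ^ 2 ≤ 1 := fun i => Real.sin_sq_le_one _
  have hsin2t : ∀ i, Real.sin (dt i) ^ 2 ≤ 1 := fun i => Real.sin_sq_le_one _
  -- decompose the difference into six terms
  have key : (Vb * W * c * Wᵀ + U * s * Wᵀ) - (Vb * Wt * ct * Wtᵀ + Ut * st * Wtᵀ)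
      = (Vb * ((W - Wt) * c * Wᵀ) + Vb * (Wt * (c - ct) * Wᵀ)
          + Vb * (Wt * (ct * (W - Wt)ᵀ)))
        + ((U - Ut) * s * Wᵀ + Ut * ((s - st) * Wᵀ)
          + Ut * (st * (W - Wt)ᵀ)) := by
    simp only [Matrix.sub_mul, Matrix.mul_sub, Matrix.transpose_sub, Matrix.mul_assoc]
    abel
  rw [key]
  -- bound each of the six terms
  have b1 : frobNorm (Vb * ((W - Wt) * c * Wᵀ)) ≤ frobNorm (W - Wt) := by
    refine frob_mono ?_
    rw [S_left_orth Vb hVb, S_right_orth Wᵀ hWtW]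
    exact S_mul_diag_le _ _ hcos2
  have b2 : frobNorm (Vb * (Wt * (c - ct) * Wᵀ)) ≤ frobNorm (c - ct) := by
    refine frob_mono ?_
    rw [S_left_orth Vb hVb, S_right_orth Wᵀ hWtW, S_left_orth Wt hWt]
  have b3 : frobNorm (Vb * (Wt * (ct * (W - Wt)ᵀ))) ≤ frobNorm (W - Wt) := by
    refine frob_mono ?_
    rw [S_left_orth Vb hVb, S_left_orth Wt hWt]
    calc S (ct * (W - Wt)ᵀ) ≤ S (W - Wt)ᵀ := S_diag_mul_le _ _ hcos2t
      _ = S (W - Wt) := S_transpose _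
  have b4 : frobNorm ((U - Ut) * s * Wᵀ) ≤ frobNorm (U - Ut) := by
    refine frob_mono ?_
    rw [S_right_orth Wᵀ hWtW]
    exact S_mul_diag_le _ _ hsin2
  have b5 : frobNorm (Ut * ((s - st) * Wᵀ)) ≤ frobNorm (s - st) := by
    refine frob_mono ?_
    rw [S_left_orth Ut hUt, S_right_orth Wᵀ hWtW]
  have b6 : frobNorm (Ut * (st * (W - Wt)ᵀ)) ≤ frobNorm (W - Wt) := by
    refine frob_mono ?_
    rw [S_left_orth Ut hUt]
    calc S (st * (W - Wt)ᵀ) ≤ S (W - Wt)ᵀ := S_diag_mul_le _ _ hsin2t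
      _ = S (W - Wt) := S_transpose _
  have t1 := frob_add_le (Vb * ((W - Wt) * c * Wᵀ) + Vb * (Wt * (c - ct) * Wᵀ)
          + Vb * (Wt * (ct * (W - Wt)ᵀ)))
        ((U - Ut) * s * Wᵀ + Ut * ((s - st) * Wᵀ) + Ut * (st * (W - Wt)ᵀ))
  have t2 := frob_add_le (Vb * ((W - Wt) * c * Wᵀ) + Vb * (Wt * (c - ct) * Wᵀ))
    (Vb * (Wt * (ct * (W - Wt)ᵀ)))
  have t3 := frob_add_le (Vb * ((W - Wt) * c * Wᵀ)) (Vb * (Wt * (c - ct) * Wᵀ))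
  have t4 := frob_add_le ((U - Ut) * s * Wᵀ + Ut * ((s - st) * Wᵀ)) (Ut * (st * (W - Wt)ᵀ))
  have t5 := frob_add_le ((U - Ut) * s * Wᵀ) (Ut * ((s - st) * Wᵀ))
  linarith
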